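/- Let H be a trace-normalised Hamiltonian on (0,∞) whose diagonal entries h₁, h₂ do not vanish a.e. on any neighbourhood of 0, and set σ_H(t) = |h₃(t)|/√(h₁(t)h₂(t)) when h₃(t) ≠ 0 and 0 otherwise, and d(H,t) = det M(t)/(m₁(t)m₂(t)). Then for every γ ∈ (0,1) and every t > 0: (1/t)·λ((0,t) ∩ σ_H^{-1}([0,γ])) ≤ max{20, 6/(1−γ)} · d(H,t), where λ is Lebesgue measure. -/

import Mathlib

open MeasureTheory Set

/-- Relative size of the off-diagonal entry of a Hamiltonian `[[h₁,h₃],[h₃,h₂]]`. -/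
noncomputable def sigmaH (h₁ h₂ h₃ : ℝ → ℝ) (s : ℝ) : ℝ :=
  if h₃ s ≠ 0 then |h₃ s| / Real.sqrt (h₁ s * h₂ s) else 0

/-- `d(H,t) = det M(t) / (m₁(t) m₂(t))` where `M(t) = ∫₀ᵗ H`. -/
noncomputable def dH (h₁ h₂ h₃ : ℝ → ℝ) (t : ℝ) : ℝ :=
  ((∫ s in Ioo 0 t, h₁ s) * (∫ s in Ioo 0 t, h₂ s) - (∫ s in Ioo 0 t, h₃ s) ^ 2) /
    ((∫ s in Ioo 0 t, h₁ s) * (∫ s in Ioo 0 t, h₂ s))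


private lemma sqrt_int {ν : Measure ℝ} {u v : ℝ → ℝ}
    (hu : Integrable u ν) (hv : Integrable v ν)
    (h0 : ∀ᵐ s ∂ν, 0 ≤ u s ∧ 0 ≤ v s) :
    Integrable (fun s => Real.sqrt (u s * v s)) ν := by
  refine Integrable.mono' ((hu.add hv).div_const 2)
    (Real.continuous_sqrt.comp_aestronglyMeasurable
      (hu.aestronglyMeasurable.mul hv.aestronglyMeasurable)) ?_
  filter_upwards [h0] with s hs
  rw [Real.norm_eq_abs, abs_of_nonneg (Real.sqrt_nonneg _)]
  rw [Real.sqrt_mul hs.1]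
  simp only [Pi.add_apply]
  nlinarith [Real.sq_sqrt hs.1, Real.sq_sqrt hs.2, sq_nonneg (Real.sqrt (u s) - Real.sqrt (v s)),
    Real.sqrt_nonneg (u s), Real.sqrt_nonneg (v s)]

private lemma my_cs {ν : Measure ℝ} {u v : ℝ → ℝ}
    (hu : Integrable u ν) (hv : Integrable v ν)
    (hu0 : 0 ≤ᵐ[ν] u) (hv0 : 0 ≤ᵐ[ν] v) :
    ∫ s, Real.sqrt (u s * v s) ∂ν ≤ Real.sqrt ((∫ s, u s ∂ν) * (∫ s, v s ∂ν)) := by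
  set P := ∫ s, u s ∂ν with hPdef
  set Q := ∫ s, v s ∂ν with hQdef
  have hP : 0 ≤ P := integral_nonneg_of_ae hu0
  have hQ : 0 ≤ Q := integral_nonneg_of_ae hv0
  rcases eq_or_lt_of_le hP with hP0 | hPpos
  · have hu_zero : u =ᵐ[ν] 0 := (integral_eq_zero_iff_of_nonneg_ae hu0 hu).mp hP0.symm
    have hz : (fun s => Real.sqrt (u s * v s)) =ᵐ[ν] 0 := by
      filter_upwards [hu_zero] with s hs
      simp [Pi.zero_apply] at hs ⊢
      simp [hs]
    rw [integral_congr_ae hz]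
    simp [← hP0]
  rcases eq_or_lt_of_le hQ with hQ0 | hQpos
  · have hv_zero : v =ᵐ[ν] 0 := (integral_eq_zero_iff_of_nonneg_ae hv0 hv).mp hQ0.symm
    have hz : (fun s => Real.sqrt (u s * v s)) =ᵐ[ν] 0 := by
      filter_upwards [hv_zero] with s hs
      simp [Pi.zero_apply] at hs ⊢
      simp [hs]
    rw [integral_congr_ae hz]
    simp [← hQ0]
  have hsP := Real.sqrt_pos.2 hPpos
  have hsQ := Real.sqrt_pos.2 hQpos
  have key : ∀ᵐ s ∂ν, 2 * (Real.sqrt P * Real.sqrt Q) * Real.sqrt (u s * v s)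
      ≤ Q * u s + P * v s := by
    filter_upwards [hu0, hv0] with s h1 h2
    rw [Real.sqrt_mul h1]
    nlinarith [sq_nonneg (Real.sqrt Q * Real.sqrt (u s) - Real.sqrt P * Real.sqrt (v s)),
      Real.sq_sqrt h1, Real.sq_sqrt h2, Real.sq_sqrt hP, Real.sq_sqrt hQ,
      Real.sqrt_nonneg (u s), Real.sqrt_nonneg (v s), Real.sqrt_nonneg P, Real.sqrt_nonneg Q]
  have hmono : ∫ s, 2 * (Real.sqrt P * Real.sqrt Q) * Real.sqrt (u s * v s) ∂ν
      ≤ ∫ s, (Q * u s + P * v s) ∂ν := by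
    refine integral_mono_of_nonneg ?_ ((hu.const_mul Q).add (hv.const_mul P)) key
    filter_upwards [hu0, hv0] with s h1 h2
    positivity
  rw [integral_const_mul, integral_add (hu.const_mul Q) (hv.const_mul P),
    integral_const_mul, integral_const_mul] at hmono
  have h2 : Real.sqrt P * Real.sqrt Q * ∫ s, Real.sqrt (u s * v s) ∂ν
      ≤ Real.sqrt P * Real.sqrt Q * (Real.sqrt P * Real.sqrt Q) := by
    nlinarith [Real.sq_sqrt hP, Real.sq_sqrt hQ]
  have := le_of_mul_le_mul_left (by linarith [h2] : Real.sqrt P * Real.sqrt Q * ∫ s, Real.sqrt (u s * v s) ∂ν ≤ Real.sqrt P * Real.sqrt Q * (Real.sqrt P * Real.sqrt Q)) (mul_pos hsP hsQ)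
  rw [Real.sqrt_mul hP]
  exact this

private lemma aux_split {ν : Measure ℝ} {u v w : ℝ → ℝ} {S : Set ℝ} {γ : ℝ}
    (hS : MeasurableSet S) (hγ0 : 0 ≤ γ) (hγ1 : γ ≤ 1)
    (hu : Integrable u ν) (hv : Integrable v ν) (hw : Integrable w ν)
    (h0 : ∀ᵐ s ∂ν, 0 ≤ u s ∧ 0 ≤ v s ∧ |w s| ≤ Real.sqrt (u s * v s))
    (hwS : ∀ᵐ s ∂ν, s ∈ S → |w s| ≤ γ * Real.sqrt (u s * v s)) :
    (1 - γ) * (∫ s, u s ∂ν) * (∫ s in S, v s ∂ν) ≤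
      (∫ s, u s ∂ν) * (∫ s, v s ∂ν) - (∫ s, w s ∂ν) ^ 2 := by
  have hu0 : 0 ≤ᵐ[ν] u := h0.mono fun s hs => hs.1
  have hv0 : 0 ≤ᵐ[ν] v := h0.mono fun s hs => hs.2.1
  have hwuv : ∀ᵐ s ∂ν, |w s| ≤ Real.sqrt (u s * v s) := h0.mono fun s hs => hs.2.2
  have hsq : Integrable (fun s => Real.sqrt (u s * v s)) ν :=
    sqrt_int hu hv (h0.mono fun s hs => ⟨hs.1, hs.2.1⟩)
  set x := ∫ s in S, u s ∂ν with hxdef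
  set y := ∫ s in S, v s ∂ν with hydef
  set x' := ∫ s in Sᶜ, u s ∂ν with hx'def
  set y' := ∫ s in Sᶜ, v s ∂ν with hy'def
  have hxx' : x + x' = ∫ s, u s ∂ν := integral_add_compl hS hu
  have hyy' : y + y' = ∫ s, v s ∂ν := integral_add_compl hS hv
  have hx0 : 0 ≤ x := integral_nonneg_of_ae (ae_restrict_of_ae hu0)
  have hy0 : 0 ≤ y := integral_nonneg_of_ae (ae_restrict_of_ae hv0)
  have hx'0 : 0 ≤ x' := integral_nonneg_of_ae (ae_restrict_of_ae hu0)
  have hy'0 : 0 ≤ y' := integral_nonneg_of_ae (ae_restrict_of_ae hv0)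
  have hCS_S : ∫ s in S, Real.sqrt (u s * v s) ∂ν ≤ Real.sqrt (x * y) :=
    my_cs (hu.restrict) (hv.restrict) (ae_restrict_of_ae hu0) (ae_restrict_of_ae hv0)
  have hCS_Sc : ∫ s in Sᶜ, Real.sqrt (u s * v s) ∂ν ≤ Real.sqrt (x' * y') :=
    my_cs (hu.restrict) (hv.restrict) (ae_restrict_of_ae hu0) (ae_restrict_of_ae hv0)
  have hwS1 : ∫ s in S, |w s| ∂ν ≤ γ * Real.sqrt (x * y) := by
    have step : ∫ s in S, |w s| ∂ν ≤ ∫ s in S, γ * Real.sqrt (u s * v s) ∂ν := by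
      refine integral_mono_of_nonneg (Filter.Eventually.of_forall fun s => abs_nonneg _)
        ((hsq.restrict).const_mul γ) ?_
      exact (ae_restrict_iff' hS).2 hwS
    rw [integral_const_mul] at step
    exact step.trans (mul_le_mul_of_nonneg_left hCS_S hγ0)
  have hwS2 : ∫ s in Sᶜ, |w s| ∂ν ≤ Real.sqrt (x' * y') := by
    have step : ∫ s in Sᶜ, |w s| ∂ν ≤ ∫ s in Sᶜ, Real.sqrt (u s * v s) ∂ν := by
      refine integral_mono_of_nonneg (Filter.Eventually.of_forall fun s => abs_nonneg _)
        (hsq.restrict) (ae_restrict_of_ae hwuv)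
    exact step.trans hCS_Sc
  have habs : |∫ s, w s ∂ν| ≤ γ * Real.sqrt (x * y) + Real.sqrt (x' * y') := by
    calc |∫ s, w s ∂ν| ≤ ∫ s, |w s| ∂ν := by
          simpa [Real.norm_eq_abs] using norm_integral_le_integral_norm (μ := ν) w
    _ = (∫ s in S, |w s| ∂ν) + ∫ s in Sᶜ, |w s| ∂ν := (integral_add_compl hS hw.abs).symm
    _ ≤ _ := add_le_add hwS1 hwS2
  set p := Real.sqrt (x * y) with hpdef
  set q := Real.sqrt (x' * y') with hqdef
  have hp0 : 0 ≤ p := Real.sqrt_nonneg _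
  have hq0 : 0 ≤ q := Real.sqrt_nonneg _
  have hp2 : p ^ 2 = x * y := Real.sq_sqrt (mul_nonneg hx0 hy0)
  have hq2 : q ^ 2 = x' * y' := Real.sq_sqrt (mul_nonneg hx'0 hy'0)
  have hm2 : (∫ s, w s ∂ν) ^ 2 ≤ (γ * p + q) ^ 2 := by
    rw [← sq_abs (∫ s, w s ∂ν)]
    exact pow_le_pow_left₀ (abs_nonneg _) habs 2
  have hpq : 2 * (p * q) ≤ x * y' + x' * y := by
    have hsq4 : (2 * (p * q)) ^ 2 ≤ (x * y' + x' * y) ^ 2 := by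
      have hpq2 : (p * q) ^ 2 = (x * y) * (x' * y') := by rw [mul_pow, hp2, hq2]
      nlinarith [sq_nonneg (x * y' - x' * y)]
    exact le_of_pow_le_pow_left₀ two_ne_zero (by positivity) hsq4
  have hexp : (γ * p + q) ^ 2 = γ ^ 2 * (x * y) + 2 * γ * (p * q) + x' * y' := by
    have h : (γ * p + q) ^ 2 = γ ^ 2 * p ^ 2 + 2 * γ * (p * q) + q ^ 2 := by ring
    rw [h, hp2, hq2]
  have hm2' : (∫ s, w s ∂ν) ^ 2 ≤ γ ^ 2 * (x * y) + 2 * γ * (p * q) + x' * y' := by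
    rw [← hexp]; exact hm2
  rw [← hxx', ← hyy']
  nlinarith [hm2', mul_le_mul_of_nonneg_left hpq hγ0,
    mul_nonneg (mul_nonneg hγ0 (by linarith : (0:ℝ) ≤ 1 - γ)) (mul_nonneg hx0 hy0),
    mul_nonneg (by linarith : (0:ℝ) ≤ 1 - γ) (mul_nonneg hx0 hy'0)]

private lemma aux_diag {ν : Measure ℝ} [IsFiniteMeasure ν] {u v w : ℝ → ℝ} {S : Set ℝ} {γ c : ℝ}
    (hS : MeasurableSet S) (hγ0 : 0 ≤ γ) (hγ1 : γ ≤ 1) (hc : 0 ≤ c)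
    (hu : Integrable u ν) (hv : Integrable v ν) (hw : Integrable w ν)
    (h0 : ∀ᵐ s ∂ν, 0 ≤ u s ∧ 0 ≤ v s ∧ |w s| ≤ Real.sqrt (u s * v s))
    (hwS : ∀ᵐ s ∂ν, s ∈ S → |w s| ≤ γ * Real.sqrt (u s * v s))
    (hcS : ∀ᵐ s ∂ν, s ∈ S → c ≤ Real.sqrt (u s * v s)) :
    (1 - γ) * c * (ν S).toReal * Real.sqrt ((∫ s, u s ∂ν) * (∫ s, v s ∂ν)) ≤
      (∫ s, u s ∂ν) * (∫ s, v s ∂ν) - (∫ s, w s ∂ν) ^ 2 := by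
  have hu0 : 0 ≤ᵐ[ν] u := h0.mono fun s hs => hs.1
  have hv0 : 0 ≤ᵐ[ν] v := h0.mono fun s hs => hs.2.1
  have hwuv : ∀ᵐ s ∂ν, |w s| ≤ Real.sqrt (u s * v s) := h0.mono fun s hs => hs.2.2
  have hsq : Integrable (fun s => Real.sqrt (u s * v s)) ν :=
    sqrt_int hu hv (h0.mono fun s hs => ⟨hs.1, hs.2.1⟩)
  set P := ∫ s, u s ∂ν with hPdef
  set Q := ∫ s, v s ∂ν with hQdef
  have hP : 0 ≤ P := integral_nonneg_of_ae hu0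
  have hQ : 0 ≤ Q := integral_nonneg_of_ae hv0
  set T := ∫ s, Real.sqrt (u s * v s) ∂ν with hTdef
  set J := ∫ s in S, Real.sqrt (u s * v s) ∂ν with hJdef
  set s₀ := Real.sqrt (P * Q) with hs0def
  have hs0 : 0 ≤ s₀ := Real.sqrt_nonneg _
  have hs0sq : s₀ ^ 2 = P * Q := Real.sq_sqrt (mul_nonneg hP hQ)
  have hJc : c * (ν S).toReal ≤ J := by
    have step : ∫ s in S, c ∂ν ≤ J := by
      refine integral_mono_of_nonneg (Filter.Eventually.of_forall fun _ => hc)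
        (hsq.restrict) ((ae_restrict_iff' hS).2 hcS)
    rwa [setIntegral_const, smul_eq_mul, mul_comm] at step
  have hJ0 : 0 ≤ J :=
    integral_nonneg fun s => Real.sqrt_nonneg _
  have hJT : J ≤ T :=
    setIntegral_le_integral hsq (Filter.Eventually.of_forall fun s => Real.sqrt_nonneg _)
  have hTs : T ≤ s₀ := my_cs hu hv hu0 hv0
  have hwS1 : ∫ s in S, |w s| ∂ν ≤ γ * J := by
    have step : ∫ s in S, |w s| ∂ν ≤ ∫ s in S, γ * Real.sqrt (u s * v s) ∂ν :=
      integral_mono_of_nonneg (Filter.Eventually.of_forall fun s => abs_nonneg _)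
        ((hsq.restrict).const_mul γ) ((ae_restrict_iff' hS).2 hwS)
    rwa [integral_const_mul] at step
  have hwS2 : ∫ s in Sᶜ, |w s| ∂ν ≤ T - J := by
    have step : ∫ s in Sᶜ, |w s| ∂ν ≤ ∫ s in Sᶜ, Real.sqrt (u s * v s) ∂ν :=
      integral_mono_of_nonneg (Filter.Eventually.of_forall fun s => abs_nonneg _)
        (hsq.restrict) (ae_restrict_of_ae hwuv)
    have hcomp : J + ∫ s in Sᶜ, Real.sqrt (u s * v s) ∂ν = T := integral_add_compl hS hsq
    linarith
  have habs : |∫ s, w s ∂ν| ≤ s₀ - (1 - γ) * J := by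
    have h1 : |∫ s, w s ∂ν| ≤ ∫ s, |w s| ∂ν := by
      simpa [Real.norm_eq_abs] using norm_integral_le_integral_norm (μ := ν) w
    have h2 : (∫ s in S, |w s| ∂ν) + ∫ s in Sᶜ, |w s| ∂ν = ∫ s, |w s| ∂ν :=
      integral_add_compl hS hw.abs
    have := add_le_add hwS1 hwS2
    nlinarith [hTs]
  have hknn : 0 ≤ s₀ - (1 - γ) * J := le_trans (abs_nonneg _) habs
  have hm2 : (∫ s, w s ∂ν) ^ 2 ≤ (s₀ - (1 - γ) * J) ^ 2 := by
    rw [← sq_abs (∫ s, w s ∂ν)]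
    exact pow_le_pow_left₀ (abs_nonneg _) habs 2
  have hkge : (1 - γ) * (c * (ν S).toReal) ≤ (1 - γ) * J :=
    mul_le_mul_of_nonneg_left hJc (by linarith)
  have hks : (1 - γ) * J ≤ s₀ := by linarith
  have hk0 : 0 ≤ (1 - γ) * J := mul_nonneg (by linarith) hJ0
  nlinarith [hm2, hs0sq, mul_le_mul_of_nonneg_right hkge hs0,
    mul_nonneg hk0 (sub_nonneg.2 hks)]


set_option maxHeartbeats 1000000 in
/-- For a trace-normalised Hamiltonian whose diagonal entries do not vanish a.e. near `0`:
`(1/t)·λ((0,t) ∩ σ_H⁻¹([0,γ])) ≤ max{20, 6/(1−γ)} · d(H,t)` for every `γ ∈ (0,1)`, `t > 0`. -/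
theorem stmt9 (h₁ h₂ h₃ : ℝ → ℝ)
    (hmeas : Measurable h₁ ∧ Measurable h₂ ∧ Measurable h₃)
    (hae : ∀ᵐ s ∂(volume.restrict (Ioi (0:ℝ))),
      0 ≤ h₁ s ∧ 0 ≤ h₂ s ∧ h₃ s ^ 2 ≤ h₁ s * h₂ s ∧ h₁ s + h₂ s = 1)
    (hnv : ∀ ε > (0:ℝ), volume {s ∈ Ioo 0 ε | h₁ s ≠ 0} ≠ 0 ∧
      volume {s ∈ Ioo 0 ε | h₂ s ≠ 0} ≠ 0)
    (hm : ∀ t > (0:ℝ), (0 < ∫ s in Ioo 0 t, h₁ s) ∧ (0 < ∫ s in Ioo 0 t, h₂ s)) :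
    ∀ γ ∈ Set.Ioo (0:ℝ) 1, ∀ t > (0:ℝ),
      1 / t * (volume (Ioo 0 t ∩ {x | sigmaH h₁ h₂ h₃ x ∈ Icc 0 γ})).toReal ≤
        max 20 (6 / (1 - γ)) * dH h₁ h₂ h₃ t := by
  obtain ⟨hm1, hm2m, hm3⟩ := hmeas
  intro γ hγ t ht
  obtain ⟨hγ0, hγ1⟩ := hγ
  have h1γ : (0:ℝ) < 1 - γ := by linarith
  obtain ⟨ha, hb⟩ := hm t ht
  unfold dH
  set ν := volume.restrict (Ioo (0:ℝ) t) with hνdef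
  haveI : IsFiniteMeasure ν := by
    constructor
    rw [hνdef, Measure.restrict_apply_univ, Real.volume_Ioo]
    exact ENNReal.ofReal_lt_top
  set a := ∫ s in Ioo 0 t, h₁ s with hadef
  set b := ∫ s in Ioo 0 t, h₂ s with hbdef
  set m := ∫ s in Ioo 0 t, h₃ s with hmdef
  have hP : ∀ᵐ s ∂ν, 0 ≤ h₁ s ∧ 0 ≤ h₂ s ∧ h₃ s ^ 2 ≤ h₁ s * h₂ s ∧ h₁ s + h₂ s = 1 :=
    ae_restrict_of_ae_restrict_of_subset Ioo_subset_Ioi_self hae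
  -- integrability
  have int1 : Integrable h₁ ν := by
    refine Integrable.mono' (integrable_const 1) hm1.aestronglyMeasurable ?_
    filter_upwards [hP] with s hs
    rw [Real.norm_eq_abs, abs_of_nonneg hs.1]
    linarith [hs.2.1]
  have int2 : Integrable h₂ ν := by
    refine Integrable.mono' (integrable_const 1) hm2m.aestronglyMeasurable ?_
    filter_upwards [hP] with s hs
    rw [Real.norm_eq_abs, abs_of_nonneg hs.2.1]
    linarith [hs.1]
  have int3 : Integrable h₃ ν := by
    refine Integrable.mono' (integrable_const 1) hm3.aestronglyMeasurable ?_
    filter_upwards [hP] with s hs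
    obtain ⟨h1, h2, h3, h4⟩ := hs
    rw [Real.norm_eq_abs]
    nlinarith [sq_abs (h₃ s), abs_nonneg (h₃ s), sq_nonneg (h₁ s - h₂ s)]
  -- nonneg packages
  have h0pack : ∀ᵐ s ∂ν, 0 ≤ h₁ s ∧ 0 ≤ h₂ s ∧ |h₃ s| ≤ Real.sqrt (h₁ s * h₂ s) := by
    filter_upwards [hP] with s hs
    refine ⟨hs.1, hs.2.1, ?_⟩
    rw [← Real.sqrt_sq_eq_abs]
    exact Real.sqrt_le_sqrt hs.2.2.1
  have h0pack' : ∀ᵐ s ∂ν, 0 ≤ h₂ s ∧ 0 ≤ h₁ s ∧ |h₃ s| ≤ Real.sqrt (h₂ s * h₁ s) := by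
    filter_upwards [h0pack] with s hs
    exact ⟨hs.2.1, hs.1, by rw [mul_comm (h₂ s) (h₁ s)]; exact hs.2.2⟩
  -- the sets
  set F := {x : ℝ | sigmaH h₁ h₂ h₃ x ∈ Icc (0:ℝ) γ} with hFdef
  have hσmeas : Measurable (sigmaH h₁ h₂ h₃) := by
    unfold sigmaH
    refine Measurable.ite ?_ (hm3.abs.div (Real.continuous_sqrt.measurable.comp (hm1.mul hm2m)))
      measurable_const
    exact (hm3 (measurableSet_singleton 0)).compl
  have hF : MeasurableSet F := hσmeas measurableSet_Icc
  set A := F ∩ {s | h₁ s < 1/50} with hAdef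
  set B := F ∩ {s | h₂ s < 1/50} with hBdef
  set E1 := F ∩ ({s | 1/50 ≤ h₁ s} ∩ {s | 1/50 ≤ h₂ s}) with hE1def
  have hAm : MeasurableSet A := hF.inter (measurableSet_lt hm1 measurable_const)
  have hBm : MeasurableSet B := hF.inter (measurableSet_lt hm2m measurable_const)
  have hE1m : MeasurableSet E1 := hF.inter
    ((measurableSet_le measurable_const hm1).inter (measurableSet_le measurable_const hm2m))
  have hsub : F ⊆ E1 ∪ A ∪ B := by
    intro s hs
    rcases lt_or_ge (h₁ s) (1/50) with h | h
    · exact Or.inl (Or.inr ⟨hs, h⟩)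
    rcases lt_or_ge (h₂ s) (1/50) with h' | h'
    · exact Or.inr ⟨hs, h'⟩
    · exact Or.inl (Or.inl ⟨hs, h, h'⟩)
  -- key a.e. bound on F
  have hkey : ∀ᵐ s ∂ν, s ∈ F → |h₃ s| ≤ γ * Real.sqrt (h₁ s * h₂ s) := by
    filter_upwards [hP] with s hs hsF
    by_cases h : h₃ s = 0
    · rw [h, abs_zero]
      exact mul_nonneg hγ0.le (Real.sqrt_nonneg _)
    · have hσ : sigmaH h₁ h₂ h₃ s = |h₃ s| / Real.sqrt (h₁ s * h₂ s) := if_pos h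
      have hle : sigmaH h₁ h₂ h₃ s ≤ γ := hsF.2
      have habs : 0 < |h₃ s| := abs_pos.2 h
      have hsqp : 0 < h₃ s ^ 2 := by rw [← sq_abs]; exact pow_pos habs 2
      have hpos : 0 < Real.sqrt (h₁ s * h₂ s) :=
        Real.sqrt_pos.2 (lt_of_lt_of_le hsqp hs.2.2.1)
      rw [hσ, div_le_iff₀ hpos] at hle
      exact hle
  have hkeyA : ∀ᵐ s ∂ν, s ∈ A → |h₃ s| ≤ γ * Real.sqrt (h₁ s * h₂ s) := by
    filter_upwards [hkey] with s hs hsA; exact hs hsA.1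
  have hkeyB : ∀ᵐ s ∂ν, s ∈ B → |h₃ s| ≤ γ * Real.sqrt (h₂ s * h₁ s) := by
    filter_upwards [hkey] with s hs hsB
    have := hs hsB.1
    rwa [mul_comm (h₁ s) (h₂ s)] at this
  have hkeyE1 : ∀ᵐ s ∂ν, s ∈ E1 → |h₃ s| ≤ γ * Real.sqrt (h₁ s * h₂ s) := by
    filter_upwards [hkey] with s hs hsE; exact hs hsE.1
  have hcE1 : ∀ᵐ s ∂ν, s ∈ E1 → (7:ℝ)/50 ≤ Real.sqrt (h₁ s * h₂ s) := by
    filter_upwards [hP] with s hs hsE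
    obtain ⟨-, h1le, h2le⟩ := hsE
    simp only [mem_setOf_eq] at h1le h2le
    have hprod : (49:ℝ)/2500 ≤ h₁ s * h₂ s := by
      nlinarith [mul_nonneg (by linarith : (0:ℝ) ≤ h₁ s - 1/50)
        (by linarith : (0:ℝ) ≤ h₂ s - 1/50), hs.2.2.2]
    have h750 : (7:ℝ)/50 = Real.sqrt ((7/50)^2) := (Real.sqrt_sq (by norm_num)).symm
    rw [h750]
    apply Real.sqrt_le_sqrt
    nlinarith
  -- apply the three estimates
  have HE1 : (1 - γ) * (7/50) * (ν E1).toReal * Real.sqrt (a * b) ≤ a * b - m ^ 2 :=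
    aux_diag hE1m hγ0.le hγ1.le (by norm_num) int1 int2 int3 h0pack hkeyE1 hcE1
  have HA : (1 - γ) * a * (∫ s in A, h₂ s ∂ν) ≤ a * b - m ^ 2 :=
    aux_split hAm hγ0.le hγ1.le int1 int2 int3 h0pack hkeyA
  have HB' : (1 - γ) * b * (∫ s in B, h₁ s ∂ν) ≤ b * a - m ^ 2 :=
    aux_split hBm hγ0.le hγ1.le int2 int1 int3 h0pack' hkeyB
  have HB : (1 - γ) * b * (∫ s in B, h₁ s ∂ν) ≤ a * b - m ^ 2 := by
    rw [mul_comm b a] at HB'; exact HB'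
  -- lower bounds for the inner set integrals
  have yA : (49:ℝ)/50 * (ν A).toReal ≤ ∫ s in A, h₂ s ∂ν := by
    have haeA : ∀ᵐ s ∂ν, s ∈ A → (49:ℝ)/50 ≤ h₂ s := by
      filter_upwards [hP] with s hs hsA
      have : h₁ s < 1/50 := hsA.2
      linarith [hs.2.2.2]
    have step : ∫ s in A, (49:ℝ)/50 ∂ν ≤ ∫ s in A, h₂ s ∂ν :=
      integral_mono_of_nonneg (Filter.Eventually.of_forall fun _ => by norm_num)
        (int2.restrict) ((ae_restrict_iff' hAm).2 haeA)
    rwa [setIntegral_const, smul_eq_mul, mul_comm] at step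
  have yB : (49:ℝ)/50 * (ν B).toReal ≤ ∫ s in B, h₁ s ∂ν := by
    have haeB : ∀ᵐ s ∂ν, s ∈ B → (49:ℝ)/50 ≤ h₁ s := by
      filter_upwards [hP] with s hs hsB
      have : h₂ s < 1/50 := hsB.2
      linarith [hs.2.2.2]
    have step : ∫ s in B, (49:ℝ)/50 ∂ν ≤ ∫ s in B, h₁ s ∂ν :=
      integral_mono_of_nonneg (Filter.Eventually.of_forall fun _ => by norm_num)
        (int1.restrict) ((ae_restrict_iff' hBm).2 haeB)
    rwa [setIntegral_const, smul_eq_mul, mul_comm] at step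
  -- basic real facts
  have habt : a + b = t := by
    have e1 : ∫ s, (h₁ s + h₂ s) ∂ν = a + b := integral_add int1 int2
    have e2 : ∫ s, (h₁ s + h₂ s) ∂ν = ∫ s, (1:ℝ) ∂ν :=
      integral_congr_ae (hP.mono fun s hs => hs.2.2.2)
    have e3 : ∫ s, (1:ℝ) ∂ν = t := by
      rw [integral_const, smul_eq_mul, mul_one, hνdef, measureReal_def, Measure.restrict_apply_univ,
        Real.volume_Ioo, sub_zero, ENNReal.toReal_ofReal (by linarith)]
    linarith [e1, e2, e3]
  have habpos : 0 < a * b := mul_pos ha hb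
  have hss : Real.sqrt (a*b) * Real.sqrt (a*b) = a * b := Real.mul_self_sqrt habpos.le
  have hs0 : 0 ≤ Real.sqrt (a*b) := Real.sqrt_nonneg _
  have hs0le : Real.sqrt (a*b) ≤ t/2 := by
    have h1 : a*b ≤ (t/2)^2 := by nlinarith [sq_nonneg (a-b)]
    calc Real.sqrt (a*b) ≤ Real.sqrt ((t/2)^2) := Real.sqrt_le_sqrt h1
      _ = t/2 := Real.sqrt_sq (by linarith)
  set LE1 := (ν E1).toReal with hLE1def
  set LA := (ν A).toReal with hLAdef
  set LB := (ν B).toReal with hLBdef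
  set D := a * b - m ^ 2 with hDdef
  have hLE1n : 0 ≤ LE1 := ENNReal.toReal_nonneg
  have hLAn : 0 ≤ LA := ENNReal.toReal_nonneg
  have hLBn : 0 ≤ LB := ENNReal.toReal_nonneg
  have hD0 : 0 ≤ D := by
    refine le_trans ?_ HE1
    have : 0 ≤ (1-γ) * (7/50) * LE1 := by positivity
    positivity
  -- pieces
  have B1 : (1-γ) * (a*b) * LE1 ≤ (25/7) * (t * D) := by
    have h := mul_le_mul_of_nonneg_right HE1 hs0
    have hBa : (1-γ) * (7/50) * LE1 * (a*b) ≤ D * Real.sqrt (a*b) := by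
      calc (1-γ) * (7/50) * LE1 * (a*b)
          = ((1-γ) * (7/50) * LE1 * Real.sqrt (a*b)) * Real.sqrt (a*b) := by
            rw [mul_assoc ((1-γ) * (7/50) * LE1), hss]
        _ ≤ D * Real.sqrt (a*b) := h
    have hBb : D * Real.sqrt (a*b) ≤ D * (t/2) := mul_le_mul_of_nonneg_left hs0le hD0
    nlinarith [hBa, hBb]
  have hb_t : b ≤ t := by linarith
  have ha_t : a ≤ t := by linarith
  have B2 : (1-γ) * (a*b) * LA ≤ (50/49) * (t * D) := by
    have h1 : (1-γ) * a * ((49:ℝ)/50 * LA) ≤ D :=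
      le_trans (mul_le_mul_of_nonneg_left yA (mul_nonneg h1γ.le ha.le)) HA
    have h2 := mul_le_mul_of_nonneg_right h1 hb.le
    have h3 : D * b ≤ D * t := mul_le_mul_of_nonneg_left hb_t hD0
    nlinarith [h2, h3]
  have B3 : (1-γ) * (a*b) * LB ≤ (50/49) * (t * D) := by
    have h1 : (1-γ) * b * ((49:ℝ)/50 * LB) ≤ D :=
      le_trans (mul_le_mul_of_nonneg_left yB (mul_nonneg h1γ.le hb.le)) HB
    have h2 := mul_le_mul_of_nonneg_right h1 ha.le
    have h3 : D * a ≤ D * t := mul_le_mul_of_nonneg_left ha_t hD0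
    nlinarith [h2, h3]
  -- measure of the whole set
  have hμF : volume (Ioo 0 t ∩ F) = ν F := by
    rw [hνdef, Measure.restrict_apply hF, inter_comm]
  have hne : ∀ S : Set ℝ, ν S ≠ ⊤ := fun S => measure_ne_top ν S
  have hLF : (ν F).toReal ≤ LE1 + LA + LB := by
    have h1 : ν F ≤ ν E1 + ν A + ν B := by
      calc ν F ≤ ν (E1 ∪ A ∪ B) := measure_mono hsub
        _ ≤ ν (E1 ∪ A) + ν B := measure_union_le _ _
        _ ≤ ν E1 + ν A + ν B := by gcongr; exact measure_union_le _ _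
    have h2 : (ν F).toReal ≤ (ν E1 + ν A + ν B).toReal := by
      refine ENNReal.toReal_mono ?_ h1
      simp [ENNReal.add_eq_top, hne]
    rwa [ENNReal.toReal_add (by simp [ENNReal.add_eq_top, hne]) (hne B),
      ENNReal.toReal_add (hne E1) (hne A)] at h2
  -- final combination
  have key : (ν F).toReal * ((1-γ) * (a*b)) ≤ 6 * D * t := by
    have h1 : (ν F).toReal * ((1-γ) * (a*b)) ≤ (LE1 + LA + LB) * ((1-γ) * (a*b)) :=
      mul_le_mul_of_nonneg_right hLF (mul_nonneg h1γ.le habpos.le)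
    have htD : 0 ≤ t * D := mul_nonneg ht.le hD0
    nlinarith [h1, B1, B2, B3, htD]
  have hmax : 6 / (1-γ) ≤ max 20 (6 / (1-γ)) := le_max_right _ _
  have hdH0 : 0 ≤ D / (a*b) := div_nonneg hD0 habpos.le
  refine le_trans ?_ (mul_le_mul_of_nonneg_right hmax hdH0)
  rw [hμF]
  have e1 : 1 / t * (ν F).toReal = (ν F).toReal / t := by ring
  have e2 : 6 / (1-γ) * (D / (a*b)) = (6 * D) / ((1-γ) * (a*b)) := div_mul_div_comm _ _ _ _
  rw [e1, e2, div_le_div_iff₀ ht (mul_pos h1γ habpos)]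
  linarith [key]
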